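/- Let f : ℝ → ℝ be defined by f(t) = e^{-1/t} for t > 0 and f(t) = 0 for t ≤ 0. For every positive integer i, the i-th derivative of f satisfies: f^{(i)}(t) = e^{-1/t} t^{-2i} Σ_{k=0}^{i-1} (-1)^k a_{i,k} t^k for t > 0, and f^{(i)}(t) = 0 for t ≤ 0, where a_{i,k} = C(i,k) · C(i-1,k) · k!. -/

import Mathlib

open Real Filter Set Polynomial Topology

noncomputable def fPU : ℝ → ℝ := fun x : ℝ => if 0 < x then Real.exp (-1 / x) else 0

lemma fPU_eq : fPU = expNegInvGlue := by
  funext x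
  simp only [fPU, expNegInvGlue]
  rcases le_or_gt x 0 with h | h
  · simp [h, not_lt.2 h]
  · simp [not_le.2 h, h, neg_div, one_div]

lemma iteratedDeriv_fPU_poly (i : ℕ) :
    ∃ Q : ℝ[X], iteratedDeriv i fPU = fun x => Q.eval x⁻¹ * expNegInvGlue x := by
  induction i with
  | zero => exact ⟨1, by simp [fPU_eq]⟩
  | succ n ih =>
    obtain ⟨Q, hQ⟩ := ih
    refine ⟨X ^ 2 * (Q - derivative Q), ?_⟩
    rw [iteratedDeriv_succ, hQ]
    funext x
    exact (expNegInvGlue.hasDerivAt_polynomial_eval_inv_mul Q x).deriv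

noncomputable def bPU (i k : ℕ) : ℝ :=
  (Nat.choose i k : ℝ) * (Nat.choose (i - 1) k : ℝ) * (Nat.factorial k : ℝ)

noncomputable def SPU (i : ℕ) (t : ℝ) : ℝ :=
  ∑ k ∈ Finset.range i, (-1 : ℝ) ^ k * bPU i k * t ^ k

lemma coeff_rec (j k : ℕ) (hk : k ≤ j) :
    bPU (j + 2) (k + 1) = bPU (j + 1) (k + 1) + (2 * (j : ℝ) + 2 - k) * bPU (j + 1) k := by
  have f1 : ((j + 2).choose (k + 1) : ℝ) = (j + 1).choose k + (j + 1).choose (k + 1) := by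
    rw [Nat.choose_succ_succ (j + 1) k]; push_cast; ring
  have f3 : ((j + 1).choose (k + 1) : ℝ) * (k + 1) = (j + 1).choose k * ((j : ℝ) + 1 - k) := by
    have := Nat.choose_succ_right_eq (j + 1) k
    calc ((j + 1).choose (k + 1) : ℝ) * (k + 1) = (((j+1).choose (k+1) * (k+1) : ℕ) : ℝ) := by push_cast; ring
    _ = (((j+1).choose k * (j + 1 - k) : ℕ) : ℝ) := by rw [this]
    _ = _ := by push_cast [Nat.cast_sub (hk.trans (Nat.le_succ j))]; ring
  have f4 : ((j).choose (k + 1) : ℝ) * (k + 1) = (j).choose k * ((j : ℝ) - k) := by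
    have := Nat.choose_succ_right_eq j k
    calc ((j).choose (k + 1) : ℝ) * (k + 1) = ((j.choose (k+1) * (k+1) : ℕ) : ℝ) := by push_cast; ring
    _ = ((j.choose k * (j - k) : ℕ) : ℝ) := by rw [this]
    _ = _ := by push_cast [Nat.cast_sub hk]; ring
  have f5 : ((j + 1).choose (k + 1) : ℝ) * (k + 1) = ((j : ℝ) + 1) * (j).choose k := by
    exact_mod_cast congrArg (Nat.cast (R := ℝ)) (Nat.add_one_mul_choose_eq j k).symm
  simp only [bPU, Nat.add_sub_cancel, Nat.factorial_succ]
  push_cast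
  set A : ℝ := ((j + 1).choose k : ℝ)
  set B : ℝ := ((j).choose k : ℝ)
  set A1 : ℝ := ((j + 1).choose (k + 1) : ℝ)
  set B1 : ℝ := ((j).choose (k + 1) : ℝ)
  set P : ℝ := ((j + 2).choose (k + 1) : ℝ)
  set Kf : ℝ := (k.factorial : ℝ)
  linear_combination (Kf * A1 * ((k:ℝ)+1)) * f1 + (Kf * (A + A1)) * f5 - (Kf * A1) * f4 + (Kf * B) * f3

lemma sum_step (j : ℕ) (t : ℝ) :
    SPU (j + 2) t = SPU (j + 1) t
      + t ^ 2 * (∑ k ∈ Finset.range (j + 1), (-1 : ℝ) ^ k * bPU (j + 1) k * ((k : ℝ) * t ^ (k - 1)))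
      - 2 * ((j : ℝ) + 1) * t * SPU (j + 1) t := by
  have hL2 : t ^ 2 * (∑ k ∈ Finset.range (j + 1), (-1 : ℝ) ^ k * bPU (j + 1) k * ((k : ℝ) * t ^ (k - 1)))
      - 2 * ((j : ℝ) + 1) * t * SPU (j + 1) t
      = ∑ k ∈ Finset.range (j + 1),
          (-1 : ℝ) ^ k * bPU (j + 1) k * (((k : ℝ) - 2 * ((j : ℝ) + 1)) * t ^ (k + 1)) := by
    rw [SPU, Finset.mul_sum, Finset.mul_sum, ← Finset.sum_sub_distrib]
    refine Finset.sum_congr rfl fun k _ => ?_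
    rcases Nat.eq_zero_or_pos k with rfl | hkpos
    · simp; ring
    · obtain ⟨m, rfl⟩ : ∃ m, k = m + 1 := ⟨k - 1, by omega⟩
      simp only [Nat.add_sub_cancel]
      push_cast
      ring
  rw [add_sub_assoc, hL2]
  have hzero : bPU (j + 1) (j + 1) = 0 := by
    simp [bPU, Nat.choose_eq_zero_of_lt (by omega : j < j + 1)]
  have hext : SPU (j + 1) t = ∑ k ∈ Finset.range (j + 2), (-1 : ℝ) ^ k * bPU (j + 1) k * t ^ k := by
    rw [Finset.sum_range_succ, hzero]; simp [SPU]
  rw [SPU, hext, Finset.sum_range_succ' _ (j + 1), Finset.sum_range_succ' _ (j + 1)]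
  have hsum : ∀ k ∈ Finset.range (j + 1),
      (-1 : ℝ) ^ (k + 1) * bPU (j + 2) (k + 1) * t ^ (k + 1)
        = (-1 : ℝ) ^ (k + 1) * bPU (j + 1) (k + 1) * t ^ (k + 1)
          + (-1 : ℝ) ^ k * bPU (j + 1) k * (((k : ℝ) - 2 * ((j : ℝ) + 1)) * t ^ (k + 1)) := by
    intro k hk
    have hkj : k ≤ j := by simpa [Nat.lt_succ_iff] using Finset.mem_range.mp hk
    linear_combination ((-1 : ℝ) ^ (k + 1) * t ^ (k + 1)) * coeff_rec j k hkj
  rw [Finset.sum_congr rfl hsum, Finset.sum_add_distrib]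
  simp [bPU]
  ring

lemma main_pos : ∀ i, 1 ≤ i → ∀ t : ℝ, 0 < t →
    iteratedDeriv i fPU t = Real.exp (-1 / t) * ((t ^ (2 * i))⁻¹ * SPU i t) := by
  intro i hi
  induction i, hi using Nat.le_induction with
  | base =>
    intro t ht
    have hev : fPU =ᶠ[𝓝 t] fun x => Real.exp (-1 / x) := by
      filter_upwards [Ioi_mem_nhds ht] with x hx
      simp only [fPU, if_pos (Set.mem_Ioi.mp hx)]
    have h0 : HasDerivAt (fun x : ℝ => -1 / x) ((t ^ 2)⁻¹) t := by
      have h := (hasDerivAt_inv ht.ne').fun_neg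
      have e : (fun x : ℝ => -1 / x) = fun x : ℝ => -x⁻¹ := by
        funext x; rw [neg_div, one_div]
      rw [e]; simpa using h
    rw [iteratedDeriv_one, hev.deriv_eq, h0.exp.deriv]
    simp [SPU, bPU]
  | succ i hi IH =>
    intro t ht
    have hev : iteratedDeriv i fPU =ᶠ[𝓝 t]
        fun x => Real.exp (-1 / x) * ((x ^ (2 * i))⁻¹ * SPU i x) := by
      filter_upwards [Ioi_mem_nhds ht] with x hx using IH x hx
    rw [iteratedDeriv_succ, hev.deriv_eq]
    have h0 : HasDerivAt (fun x : ℝ => -1 / x) ((t ^ 2)⁻¹) t := by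
      have h := (hasDerivAt_inv ht.ne').fun_neg
      have e : (fun x : ℝ => -1 / x) = fun x : ℝ => -x⁻¹ := by
        funext x; rw [neg_div, one_div]
      rw [e]; simpa using h
    have hS : HasDerivAt (fun x => SPU i x)
        (∑ k ∈ Finset.range i, (-1 : ℝ) ^ k * bPU i k * ((k : ℝ) * t ^ (k - 1))) t := by
      exact HasDerivAt.fun_sum fun k _ => (hasDerivAt_pow k t).const_mul ((-1 : ℝ) ^ k * bPU i k)
    have hpow : HasDerivAt (fun x : ℝ => (x ^ (2 * i))⁻¹)
        (-(((2 * i : ℕ) : ℝ) * t ^ (2 * i - 1)) / (t ^ (2 * i)) ^ 2) t :=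
      (hasDerivAt_pow (2 * i) t).inv (pow_ne_zero _ ht.ne')
    have hg := h0.exp.fun_mul (hpow.fun_mul hS)
    rw [hg.deriv]
    obtain ⟨j, rfl⟩ : ∃ j, i = j + 1 := ⟨i - 1, by omega⟩
    rw [show j + 1 + 1 = j + 2 from rfl, sum_step j t]
    have e1 : 2 * (j + 1) - 1 = 2 * j + 1 := by omega
    rw [e1]
    have ht' : t ≠ 0 := ht.ne'
    push_cast
    set E : ℝ := Real.exp (-1 / t)
    set A : ℝ := SPU (j + 1) t
    set Bv : ℝ := ∑ k ∈ Finset.range (j + 1), (-1 : ℝ) ^ k * bPU (j + 1) k * ((k : ℝ) * t ^ (k - 1))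
    field_simp
    ring

/-- Let `f(t) = exp (-1/t)` for `t > 0` and `f(t) = 0` for `t ≤ 0`.
For every positive integer `i`, the `i`-th derivative of `f` equals
`exp (-1/t) / t^(2i) * ∑_{k=0}^{i-1} (-1)^k a_{i,k} t^k` for `t > 0`, and `0` for `t ≤ 0`,
where `a_{i,k} = C(i,k) * C(i-1,k) * k!`. -/
theorem iteratedDeriv_partition_unity_function (i : ℕ) (hi : 1 ≤ i) :
    (∀ t : ℝ, 0 < t →
      iteratedDeriv i (fun x : ℝ => if 0 < x then Real.exp (-1 / x) else 0) t =
        Real.exp (-1 / t) / t ^ (2 * i) *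
          ∑ k ∈ Finset.range i,
            (-1 : ℝ) ^ k *
              ((Nat.choose i k : ℝ) * (Nat.choose (i - 1) k : ℝ) * (Nat.factorial k : ℝ)) * t ^ k) ∧
    (∀ t : ℝ, t ≤ 0 →
      iteratedDeriv i (fun x : ℝ => if 0 < x then Real.exp (-1 / x) else 0) t = 0) := by
  have hf : (fun x : ℝ => if 0 < x then Real.exp (-1 / x) else 0) = fPU := rfl
  constructor
  · intro t ht
    rw [hf, main_pos i hi t ht]
    simp only [SPU, bPU]
    rw [div_eq_mul_inv]
    ring
  · intro t ht
    obtain ⟨Q, hQ⟩ := iteratedDeriv_fPU_poly i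
    rw [hf, hQ]
    simp [expNegInvGlue.zero_of_nonpos ht]
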